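/- Let (K, v) be a valued field and let L/K be an algebraic field extension. Let R be the integral closure of the valuation ring 𝒪_v in L. Then the map sending a maximal ideal 𝔪 of R to the localization R_𝔪 (viewed as a subring of L) is a bijection from the set of maximal ideals of R onto the set of valuation subrings of L extending 𝒪_v; its inverse sends a valuation subring 𝒪 of L with maximal ideal 𝔪_𝒪 to 𝔪_𝒪 ∩ R. -/

import Mathlib

set_option maxHeartbeats 1000000
set_option synthInstance.maxHeartbeats 1000000

/-- For a field extension `L/K` and a valuation subring `v` of `K`, the algebra structure of
`L` over the valuation ring `𝒪_v`, via the inclusion `𝒪_v ⊆ K ⊆ L`. -/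
noncomputable instance valAlgebra {K L : Type*} [Field K] [Field L] [Algebra K L]
    (v : ValuationSubring K) : Algebra v L :=
  ((algebraMap K L).comp v.subtype).toAlgebra

section Aux

open Finset Polynomial

variable {K L : Type*} [Field K] [Field L] [Algebra K L] (v : ValuationSubring K)

lemma valAlgebraMap_apply (a : v) : algebraMap v L a = algebraMap K L (a : K) := rfl

/-- integral elements lie in every valuation subring containing the image of `v`. -/
lemma aux_int_mem (w : ValuationSubring L) (hvw : ∀ a : K, a ∈ v → algebraMap K L a ∈ w)
    {x : L} (hx : x ∈ integralClosure v L) : x ∈ w := by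
  have hx' : IsIntegral (v : Type _) x := hx
  obtain ⟨p, pmonic, hp⟩ := hx'
  have : x ∈ w.toLocalSubring.toSubring := by
    apply LocalSubring.mem_of_isMax_of_isIntegral w.isMax_toLocalSubring
    refine ⟨p.map (((algebraMap K L).comp v.subtype).codRestrict w.toSubring
      (fun a => hvw _ a.2)), pmonic.map _, ?_⟩
    refine (Polynomial.eval₂_map _ _ _).trans ?_
    exact hp
  exact this


lemma aux_reflect {x : L} (hx0 : x ≠ 0) (hxT : x ∈ Algebra.adjoin (v : Type _) {x⁻¹}) :
    IsIntegral (v : Type _) x := by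
  rw [Algebra.adjoin_singleton_eq_range_aeval] at hxT
  obtain ⟨p, hp⟩ := hxT
  have hinv : Invertible x⁻¹ := invertibleOfNonzero (inv_ne_zero hx0)
  set n := p.natDegree with hn
  have hrefl : eval₂ (algebraMap v L) x (reflect n p) = x ^ (n + 1) := by
    have := eval₂_reflect_mul_pow (algebraMap v L) x⁻¹ n p le_rfl
    rw [invOf_eq_right_inv (inv_mul_cancel₀ hx0)] at this
    -- this : eval₂ _ x (reflect n p) * (x⁻¹) ^ n = eval₂ _ x⁻¹ p
    have h2 : eval₂ (algebraMap v L) x⁻¹ p = x := hp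
    rw [h2] at this
    have := congrArg (· * x ^ n) this
    simp only [mul_assoc, ← mul_pow, inv_mul_cancel₀ hx0, one_pow, mul_one] at this
    rw [this, pow_succ, mul_comm]
  refine ⟨X ^ (n + 1) - reflect n p, ?_, ?_⟩
  · apply monic_X_pow_sub
    refine lt_of_le_of_lt ?_ (by exact_mod_cast Nat.lt_succ_self n : (n : WithBot ℕ) < (n + 1 : ℕ))
    rw [Polynomial.degree_le_iff_coeff_zero]
    intro m hm
    rw [coeff_reflect]
    apply coeff_eq_zero_of_natDegree_lt
    have hmn : n < m := by exact_mod_cast hm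
    rwa [revAt_eq_self_of_lt hmn]
  · rw [eval₂_sub, eval₂_X_pow, hrefl, sub_self]


lemma aux_mem_int (x : L)
    (H : ∀ w : ValuationSubring L, (∀ a : K, a ∈ v → algebraMap K L a ∈ w) → x ∈ w) :
    x ∈ integralClosure v L := by
  by_contra hx
  have hx0 : x ≠ 0 := fun e => hx (e ▸ (integralClosure v L).zero_mem)
  set T := Algebra.adjoin (v : Type _) {x⁻¹} with hT
  have hxiT : x⁻¹ ∈ T := Algebra.self_mem_adjoin_singleton _ _
  have hxiT' : x⁻¹ ∈ T.toSubring := hxiT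
  have hnu : ¬ IsUnit (⟨x⁻¹, hxiT'⟩ : T.toSubring) := by
    intro h
    obtain ⟨u, hu⟩ := isUnit_iff_exists_inv.mp h
    have hu' : x⁻¹ * (u : L) = 1 := congrArg Subtype.val hu
    have hux : (u : L) = x := by
      have h2 := congrArg (x * ·) hu'
      simpa [← mul_assoc, mul_inv_cancel₀ hx0] using h2
    have : x ∈ T := hux ▸ u.2
    exact hx (aux_reflect v hx0 this)
  obtain ⟨M, hM, hM'⟩ := Ideal.exists_le_maximal
    (Ideal.span {(⟨x⁻¹, hxiT'⟩ : T.toSubring)})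
    (by rwa [Ne, Ideal.span_singleton_eq_top])
  haveI := hM
  obtain ⟨w, hle, hloc⟩ := (LocalSubring.ofPrime T.toSubring M).exists_le_valuationSubring
  refine absurd (H w ?_) ?_
  · intro a ha
    exact hle (LocalSubring.le_ofPrime _ _ (show algebraMap K L a ∈ T.toSubring from
      T.algebraMap_mem ⟨a, ha⟩))
  · intro hxw
    have h1 : ¬ IsUnit (algebraMap T.toSubring (LocalSubring.ofPrime T.toSubring M).toSubring
        ⟨x⁻¹, hxiT'⟩) := by
      have hiff := IsLocalization.AtPrime.isUnit_to_map_iff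
        ((LocalSubring.ofPrime T.toSubring M).toSubring) M (⟨x⁻¹, hxiT'⟩ : T.toSubring)
      exact fun hu => (hiff.mp hu) (hM' (Ideal.subset_span rfl))
    apply h1
    apply hloc.1
    refine isUnit_iff_exists_inv.mpr ⟨⟨x, hxw⟩, Subtype.ext ?_⟩
    exact inv_mul_cancel₀ hx0

lemma aux_mem_iff (w : ValuationSubring L) (hw : w.comap (algebraMap K L) = v) (a : K) :
    algebraMap K L a ∈ w ↔ a ∈ v := by
  conv_rhs => rw [← hw]
  exact ValuationSubring.mem_comap.symm

lemma aux_le_iff (w : ValuationSubring L) (hw : w.comap (algebraMap K L) = v) (a : K) :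
    w.valuation (algebraMap K L a) ≤ 1 ↔ v.valuation a ≤ 1 := by
  rw [ValuationSubring.valuation_le_one_iff, ValuationSubring.valuation_le_one_iff,
    aux_mem_iff v w hw]

lemma aux_lt_iff (w : ValuationSubring L) (hw : w.comap (algebraMap K L) = v) (a : K) :
    w.valuation (algebraMap K L a) < 1 ↔ v.valuation a < 1 := by
  rcases eq_or_ne a 0 with rfl | ha
  · simp
  have haL : algebraMap K L a ≠ 0 := by
    simpa using ha
  have e1 : w.valuation (algebraMap K L a) < 1 ↔ ¬ w.valuation (algebraMap K L a⁻¹) ≤ 1 := by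
    rw [map_inv₀, map_inv₀, not_le, one_lt_inv₀ (zero_lt_iff.mpr (w.valuation.ne_zero_iff.mpr haL))]
  have e2 : v.valuation a < 1 ↔ ¬ v.valuation a⁻¹ ≤ 1 := by
    rw [map_inv₀, not_le, one_lt_inv₀ (zero_lt_iff.mpr (v.valuation.ne_zero_iff.mpr ha))]
  rw [e1, e2, aux_le_iff v w hw]


lemma aux_crux [Algebra.IsAlgebraic K L] (w : ValuationSubring L)
    (hw : w.comap (algebraMap K L) = v) {z : L} (hz : z ∈ w) :
    ∃ c : L, c ∈ integralClosure v L ∧ z * c ∈ integralClosure v L ∧ w.valuation c = 1 := by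
  obtain ⟨p, hp0, hpz⟩ := (Algebra.IsAlgebraic.isAlgebraic (R := K) z)
  set n := p.natDegree with hn
  have hsum0 : ∑ i ∈ range (n + 1), algebraMap K L (p.coeff i) * z ^ i = 0 := by
    have h := (Polynomial.aeval_eq_sum_range (R := K) (p := p) z).symm
    rw [hpz] at h
    rw [← h]
    exact Finset.sum_congr rfl fun i _ => (Algebra.smul_def _ _).symm
  letI : DecidablePred (fun i => p.coeff i ≠ 0) := fun _ => Classical.propDecidable _
  have hs : ((range (n + 1)).filter (fun i => p.coeff i ≠ 0)).Nonempty :=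
    ⟨n, mem_filter.mpr ⟨mem_range.mpr n.lt_succ_self, by
      show p.coeff n ≠ 0
      rw [hn, Polynomial.coeff_natDegree]
      exact Polynomial.leadingCoeff_ne_zero.mpr hp0⟩⟩
  obtain ⟨j₁, hj₁mem, hj₁max⟩ :=
    Finset.exists_max_image _ (fun i => v.valuation (p.coeff i)) hs
  set d := p.coeff j₁ with hd
  have hd0 : d ≠ 0 := (mem_filter.mp hj₁mem).2
  have hj₁n : j₁ ≤ n := Nat.lt_succ_iff.mp (mem_range.mp (mem_filter.mp hj₁mem).1)
  set b : ℕ → K := fun i => p.coeff i / d with hb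
  set B : ℕ → L := fun i => algebraMap K L (b i) with hB
  have hble : ∀ i, v.valuation (b i) ≤ 1 := by
    intro i
    rcases le_or_gt i n with h | h
    · by_cases hi : p.coeff i = 0
      · simp [hb, hi]
      · have hle : v.valuation (p.coeff i) ≤ v.valuation d :=
          hj₁max i (mem_filter.mpr ⟨mem_range.mpr (Nat.lt_succ_of_le h), hi⟩)
        rw [hb]
        simp only [map_div₀]
        rw [div_le_one₀ (zero_lt_iff.mpr (v.valuation.ne_zero_iff.mpr hd0))]
        exact hle
    · simp [hb, p.coeff_eq_zero_of_natDegree_lt h]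
  have hbj₁ : v.valuation (b j₁) = 1 := by
    simp only [hb]
    rw [← hd, div_self hd0, map_one]
  have hsum : ∑ i ∈ range (n + 1), B i * z ^ i = 0 := by
    have h2 : ∑ i ∈ range (n + 1), B i * z ^ i =
        (∑ i ∈ range (n + 1), algebraMap K L (p.coeff i) * z ^ i) * (algebraMap K L d)⁻¹ := by
      rw [Finset.sum_mul]
      refine Finset.sum_congr rfl fun i _ => ?_
      simp only [hB, hb]
      rw [map_div₀, div_eq_mul_inv]
      ring
    rw [h2, hsum0, zero_mul]
  letI : DecidablePred (fun i : ℕ => 1 ≤ v.valuation (b i)) := fun _ => Classical.propDecidable _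
  set i₀ := Nat.findGreatest (fun i => 1 ≤ v.valuation (b i)) n with hi₀
  have hi₀n : i₀ ≤ n := by rw [hi₀]; exact Nat.findGreatest_le n
  have hP : 1 ≤ v.valuation (b i₀) := by
    rw [hi₀]
    exact Nat.findGreatest_spec (P := fun i => 1 ≤ v.valuation (b i)) hj₁n hbj₁.ge
  have hvb0 : v.valuation (b i₀) = 1 := le_antisymm (hble i₀) hP
  have hhigh : ∀ j, i₀ < j → v.valuation (b j) < 1 := by
    intro j hj
    rcases le_or_gt j n with h | h
    · refine lt_of_not_ge (Nat.findGreatest_is_greatest (P := fun i => 1 ≤ v.valuation (b i))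
        (by rw [hi₀] at hj; exact hj) h)
    · simp [hb, p.coeff_eq_zero_of_natDegree_lt h, zero_lt_one]
  -- transfer to w
  have hBle : ∀ i, w.valuation (B i) ≤ 1 := fun i => (aux_le_iff v w hw _).mpr (hble i)
  have hBlt : ∀ j, i₀ < j → w.valuation (B j) < 1 := fun j hj =>
    (aux_lt_iff v w hw _).mpr (hhigh j hj)
  have hBi₀ : w.valuation (B i₀) = 1 :=
    le_antisymm (hBle i₀) (not_lt.mp (fun hlt => absurd ((aux_lt_iff v w hw _).mp hlt)
      (by rw [hvb0]; exact lt_irrefl 1)))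
  have hzval : w.valuation z ≤ 1 := (ValuationSubring.valuation_le_one_iff w z).mpr hz
  have htermlt : ∀ j, i₀ < j → w.valuation (B j * z ^ j) < 1 := by
    intro j hj
    rw [Valuation.map_mul]
    calc w.valuation (B j) * w.valuation (z ^ j)
        ≤ w.valuation (B j) * 1 := mul_le_mul_right (by rw [map_pow]; exact pow_le_one' hzval j) _
      _ = w.valuation (B j) := mul_one _
      _ < 1 := hBlt j hj
  have hi₀pos : 0 < i₀ := by
    rcases Nat.eq_zero_or_pos i₀ with h0 | h
    · exfalso
      rw [Finset.sum_range_succ'] at hsum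
      have hB0 : B 0 * z ^ 0 = -∑ i ∈ range n, B (i + 1) * z ^ (i + 1) :=
        eq_neg_of_add_eq_zero_right hsum
      have : w.valuation (B 0) < 1 := by
        have := Valuation.map_sum_lt w.valuation (one_ne_zero)
          (fun i (_ : i ∈ range n) => htermlt (i + 1) (by omega))
        rw [← Valuation.map_neg, ← hB0, pow_zero, mul_one] at this
        exact this
      rw [h0] at hBi₀
      exact absurd (hBi₀ ▸ this) (lt_irrefl 1)
    · exact h
  set c : L := ∑ i ∈ Icc i₀ n, B i * z ^ (i - i₀) with hc
  have hcval : w.valuation c = 1 := by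
    have hcsplit : c = B i₀ + ∑ i ∈ Ioc i₀ n, B i * z ^ (i - i₀) := by
      rw [hc, Finset.Icc_eq_cons_Ioc hi₀n, Finset.sum_cons, Nat.sub_self, pow_zero, mul_one]
    have hlt1 : w.valuation (∑ i ∈ Ioc i₀ n, B i * z ^ (i - i₀)) < 1 := by
      refine Valuation.map_sum_lt _ one_ne_zero fun i hi => ?_
      have hii : i₀ < i := (mem_Ioc.mp hi).1
      calc w.valuation (B i * z ^ (i - i₀))
          ≤ w.valuation (B i) * 1 := by
            rw [Valuation.map_mul]
            exact mul_le_mul_right (by rw [map_pow]; exact pow_le_one' hzval _) _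
        _ = w.valuation (B i) := mul_one _
        _ < 1 := hBlt i hii
    rw [hcsplit, Valuation.map_add_eq_of_lt_left _ (by rw [hBi₀]; exact hlt1), hBi₀]
  have key : ∀ w' : ValuationSubring L, (∀ a : K, a ∈ v → algebraMap K L a ∈ w') →
      c ∈ w' ∧ z * c ∈ w' := by
    intro w' hvw'
    have hBmem : ∀ i, B i ∈ w' := fun i =>
      hvw' _ (v.mem_of_valuation_le_one _ (hble i))
    by_cases hzw' : z ∈ w'
    · exact ⟨sum_mem fun i _ => mul_mem (hBmem i) (pow_mem hzw' _),
        mul_mem hzw' (sum_mem fun i _ => mul_mem (hBmem i) (pow_mem hzw' _))⟩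
    · have hz0 : z ≠ 0 := fun e => hzw' (e ▸ zero_mem w')
      have hzi : z⁻¹ ∈ w' := (w'.mem_or_inv_mem z).resolve_left hzw'
      have hid : c = -∑ i ∈ range i₀, B i * (z⁻¹) ^ (i₀ - i) := by
        apply mul_left_cancel₀ (pow_ne_zero i₀ hz0)
        have lhs : z ^ i₀ * c = ∑ i ∈ Icc i₀ n, B i * z ^ i := by
          rw [hc, Finset.mul_sum]
          refine Finset.sum_congr rfl fun i hi => ?_
          have hle : i₀ ≤ i := (mem_Icc.mp hi).1
          calc z ^ i₀ * (B i * z ^ (i - i₀)) = B i * (z ^ i₀ * z ^ (i - i₀)) := by ring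
            _ = B i * z ^ i := by rw [← pow_add, Nat.add_sub_cancel' hle]
        have rhs : z ^ i₀ * -∑ i ∈ range i₀, B i * (z⁻¹) ^ (i₀ - i) =
            -∑ i ∈ range i₀, B i * z ^ i := by
          rw [mul_neg, Finset.mul_sum, neg_inj]
          refine Finset.sum_congr rfl fun i hi => ?_
          have hle : i ≤ i₀ := le_of_lt (mem_range.mp hi)
          have hzz : z ^ i₀ = z ^ (i₀ - i) * z ^ i := by
            rw [← pow_add, Nat.sub_add_cancel hle]
          calc z ^ i₀ * (B i * (z⁻¹) ^ (i₀ - i))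
              = (z ^ (i₀ - i) * (z⁻¹) ^ (i₀ - i)) * (B i * z ^ i) := by rw [hzz]; ring
            _ = B i * z ^ i := by rw [← mul_pow, mul_inv_cancel₀ hz0, one_pow, one_mul]
        rw [lhs, rhs]
        have hsplit : ∑ i ∈ range i₀, B i * z ^ i + ∑ i ∈ Icc i₀ n, B i * z ^ i = 0 := by
          rw [← Finset.Ico_add_one_right_eq_Icc]
          exact (Finset.sum_range_add_sum_Ico _ (by omega : i₀ ≤ n + 1)).trans hsum
        exact eq_neg_of_add_eq_zero_right hsplit
      have hid2 : z * c = -∑ i ∈ range i₀, B i * (z⁻¹) ^ (i₀ - i - 1) := by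
        rw [hid, mul_neg, Finset.mul_sum, neg_inj]
        refine Finset.sum_congr rfl fun i hi => ?_
        have hlt : i < i₀ := mem_range.mp hi
        obtain ⟨k, hk⟩ : ∃ k, i₀ - i = k + 1 := ⟨i₀ - i - 1, by omega⟩
        have hk2 : i₀ - i - 1 = k := by omega
        rw [hk2, hk, pow_succ']
        calc z * (B i * (z⁻¹ * (z⁻¹) ^ k)) = (z * z⁻¹) * (B i * (z⁻¹) ^ k) := by ring
          _ = B i * (z⁻¹) ^ k := by rw [mul_inv_cancel₀ hz0, one_mul]
      constructor
      · rw [hid]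
        exact neg_mem (sum_mem fun i _ => mul_mem (hBmem i) (pow_mem hzi _))
      · rw [hid2]
        exact neg_mem (sum_mem fun i _ => mul_mem (hBmem i) (pow_mem hzi _))
  exact ⟨c, aux_mem_int v c (fun w' h => (key w' h).1),
    aux_mem_int v _ (fun w' h => (key w' h).2), hcval⟩

/-- The ideal of elements of the integral closure with `w`-valuation `< 1`. -/
def extIdeal (w : ValuationSubring L)
    (hRw : ∀ x : integralClosure v L, (x : L) ∈ w) : Ideal (integralClosure v L) where
  carrier := {x | w.valuation x < 1}
  add_mem' {a b} ha hb := by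
    simp only [Set.mem_setOf_eq] at *
    push_cast
    exact Valuation.map_add_lt _ ha hb
  zero_mem' := by
    simp only [Set.mem_setOf_eq]
    push_cast
    simp
  smul_mem' r x hx := by
    simp only [Set.mem_setOf_eq, smul_eq_mul] at *
    push_cast
    rw [Valuation.map_mul]
    calc w.valuation r * w.valuation x ≤ 1 * w.valuation x :=
        mul_le_mul_left ((w.valuation_le_one_iff _).mpr (hRw r)) _
      _ = w.valuation x := one_mul _
      _ < 1 := hx

lemma mem_extIdeal (w : ValuationSubring L) (hRw : ∀ x : integralClosure v L, (x : L) ∈ w)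
    (x : integralClosure v L) : x ∈ extIdeal v w hRw ↔ w.valuation x < 1 := ⟨fun h => h, fun h => h⟩

lemma extIdeal_isPrime (w : ValuationSubring L)
    (hRw : ∀ x : integralClosure v L, (x : L) ∈ w) : (extIdeal v w hRw).IsPrime := by
  constructor
  · intro h
    have h1 : (1 : integralClosure v L) ∈ extIdeal v w hRw := (Ideal.eq_top_iff_one _).mp h
    rw [mem_extIdeal] at h1
    push_cast at h1
    rw [map_one] at h1
    exact lt_irrefl 1 h1
  · intro x y hxy
    rw [mem_extIdeal] at hxy
    push_cast at hxy
    rw [Valuation.map_mul] at hxy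
    by_contra hcon
    push_neg at hcon
    obtain ⟨hx, hy⟩ := hcon
    rw [mem_extIdeal] at hx hy
    have hx1 : w.valuation x = 1 :=
      le_antisymm ((w.valuation_le_one_iff _).mpr (hRw x)) (not_lt.mp hx)
    have hy1 : w.valuation y = 1 :=
      le_antisymm ((w.valuation_le_one_iff _).mpr (hRw y)) (not_lt.mp hy)
    rw [hx1, hy1, mul_one] at hxy
    exact lt_irrefl 1 hxy

lemma extIdeal_isMaximal (w : ValuationSubring L) (hw : w.comap (algebraMap K L) = v)
    (hRw : ∀ x : integralClosure v L, (x : L) ∈ w) : (extIdeal v w hRw).IsMaximal := by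
  haveI := extIdeal_isPrime v w hRw
  apply Ideal.isMaximal_of_isIntegral_of_isMaximal_comap (R := (v : Type _))
  have : (extIdeal v w hRw).comap (algebraMap (v : Type _) (integralClosure v L)) =
      IsLocalRing.maximalIdeal v := by
    ext a
    rw [Ideal.mem_comap, mem_extIdeal]
    have hcoe : ((algebraMap (v : Type _) (integralClosure v L) a : integralClosure v L) : L) =
        algebraMap K L (a : K) := rfl
    rw [hcoe, aux_lt_iff v w hw, ValuationSubring.valuation_lt_one_iff]
  rw [this]
  exact IsLocalRing.maximalIdeal.isMaximal _

lemma aux_set [Algebra.IsAlgebraic K L] (w : ValuationSubring L)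
    (hw : w.comap (algebraMap K L) = v) (𝔪 : Ideal (integralClosure v L))
    (hiff : ∀ x : integralClosure v L, x ∈ 𝔪 ↔ w.valuation x < 1) :
    (w : Set L) = {z : L | ∃ b c : integralClosure v L, c ∉ 𝔪 ∧ z * (c : L) = (b : L)} := by
  ext z
  simp only [SetLike.mem_coe, Set.mem_setOf_eq]
  constructor
  · intro hzw
    obtain ⟨c, hc, hzc, hval⟩ := aux_crux v w hw hzw
    exact ⟨⟨z * c, hzc⟩, ⟨c, hc⟩,
      fun hmem => absurd ((hiff _).mp hmem) (by rw [hval]; exact lt_irrefl 1), rfl⟩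
  · rintro ⟨b, c, hc, he⟩
    have hvw : ∀ a : K, a ∈ v → algebraMap K L a ∈ w := fun a ha => (aux_mem_iff v w hw a).mpr ha
    have hcw : (c : L) ∈ w := aux_int_mem v w hvw c.2
    have hbw : (b : L) ∈ w := aux_int_mem v w hvw b.2
    have hc1 : w.valuation c = 1 := le_antisymm ((w.valuation_le_one_iff _).mpr hcw)
      (not_lt.mp (fun hlt => hc ((hiff c).mpr hlt)))
    have hc0 : (c : L) ≠ 0 := by
      intro e
      rw [e, map_zero] at hc1
      exact zero_ne_one hc1
    have hz : z = (b : L) * (c : L)⁻¹ := by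
      rw [← he]
      field_simp
    rw [hz]
    apply w.mem_of_valuation_le_one
    rw [Valuation.map_mul, map_inv₀, hc1, inv_one, mul_one]
    exact (w.valuation_le_one_iff _).mpr hbw

lemma aux_main (𝔪 : Ideal (integralClosure v L)) (h𝔪 : 𝔪.IsMaximal) :
    ∃ w : ValuationSubring L, w.comap (algebraMap K L) = v ∧
      ∀ x : integralClosure v L, (x ∈ 𝔪 ↔ w.valuation x < 1) := by
  haveI := h𝔪
  haveI : 𝔪.IsPrime := h𝔪.isPrime
  let 𝔪' : Ideal ((integralClosure v L).toSubring : Subring L) := 𝔪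
  haveI h𝔪'p : 𝔪'.IsPrime := h𝔪.isPrime
  obtain ⟨w, hle, hloc⟩ :=
    (LocalSubring.ofPrime (integralClosure v L).toSubring 𝔪').exists_le_valuationSubring
  have hRA : ∀ x : integralClosure v L,
      (x : L) ∈ (LocalSubring.ofPrime (integralClosure v L).toSubring 𝔪').toSubring :=
    fun x => LocalSubring.le_ofPrime _ _ x.2
  have hRw : ∀ x : integralClosure v L, (x : L) ∈ w := fun x => hle (hRA x)
  have hiff : ∀ x : integralClosure v L, (x ∈ 𝔪 ↔ w.valuation x < 1) := by
    intro x
    have hloc_iff := IsLocalization.AtPrime.isUnit_to_map_iff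
      ((LocalSubring.ofPrime (integralClosure v L).toSubring 𝔪').toSubring) 𝔪'
      (⟨(x : L), x.2⟩ : ((integralClosure v L).toSubring : Subring L))
    constructor
    · intro hx
      have hxwn : ¬ IsUnit (⟨(x : L), hRw x⟩ : w) := by
        intro hu
        exact (hloc_iff.mp (hloc.1 (a := ⟨(x : L), hRA x⟩) hu)) hx
      exact (ValuationSubring.valuation_lt_one_iff w ⟨(x : L), hRw x⟩).mp
        ((IsLocalRing.mem_maximalIdeal (⟨(x : L), hRw x⟩ : w)).mpr hxwn)
    · intro hlt
      by_contra hx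
      have hu := hloc_iff.mpr hx
      have hu2 : IsUnit (⟨(x : L), hRw x⟩ : w) := hu.map (Subring.inclusion hle)
      have hval1 : w.valuation x = 1 :=
        (ValuationSubring.valuation_eq_one_iff w ⟨(x : L), hRw x⟩).mp hu2
      rw [hval1] at hlt
      exact lt_irrefl 1 hlt
  refine ⟨w, ?_, hiff⟩
  have hmax : (𝔪.comap (algebraMap (v : Type _) (integralClosure v L))).IsMaximal :=
    Ideal.isMaximal_comap_of_isIntegral_of_isMaximal 𝔪
  have heq : 𝔪.comap (algebraMap (v : Type _) (integralClosure v L)) =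
      IsLocalRing.maximalIdeal v := IsLocalRing.eq_maximalIdeal hmax
  ext a
  rw [ValuationSubring.mem_comap]
  constructor
  · intro haw
    by_contra hav
    have ha0 : a ≠ 0 := fun e => hav (e ▸ zero_mem v)
    have hai : a⁻¹ ∈ v := (v.mem_or_inv_mem a).resolve_left hav
    have haim : (⟨a⁻¹, hai⟩ : v) ∈ IsLocalRing.maximalIdeal (v : Type _) := by
      rw [ValuationSubring.valuation_lt_one_iff]
      have h1 : ¬ v.valuation a ≤ 1 := fun h => hav (v.mem_of_valuation_le_one a h)
      show v.valuation a⁻¹ < 1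
      rw [map_inv₀]
      exact (inv_lt_one₀ (zero_lt_iff.mpr (v.valuation.ne_zero_iff.mpr ha0))).mpr
        (lt_of_not_ge h1)
    have hmem : algebraMap (v : Type _) (integralClosure v L) ⟨a⁻¹, hai⟩ ∈ 𝔪 := by
      rw [← heq] at haim
      exact Ideal.mem_comap.mp haim
    have hwlt := (hiff _).mp hmem
    have hcoe : ((algebraMap (v : Type _) (integralClosure v L) ⟨a⁻¹, hai⟩ :
        integralClosure v L) : L) = (algebraMap K L a)⁻¹ := by
      show algebraMap K L a⁻¹ = (algebraMap K L a)⁻¹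
      exact map_inv₀ (algebraMap K L) a
    rw [hcoe] at hwlt
    have hA0 : algebraMap K L a ≠ 0 := by simpa using ha0
    have h1lt : 1 < w.valuation (algebraMap K L a) := by
      rw [map_inv₀] at hwlt
      exact (inv_lt_one₀ (zero_lt_iff.mpr (w.valuation.ne_zero_iff.mpr hA0))).mp hwlt
    exact absurd ((w.valuation_le_one_iff _).mpr haw) (not_le.mpr h1lt)
  · intro hav
    exact hRw (algebraMap (v : Type _) (integralClosure v L) ⟨a, hav⟩)

end Aux

/-- Let `(K, v)` be a valued field, `L/K` an algebraic field extension, and `R` the integral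
closure of `𝒪_v` in `L`. Then `𝔪 ↦ R_𝔪` is a bijection from the maximal ideals of `R` onto
the valuation subrings of `L` extending `v` (here `R_𝔪 = {z ∈ L | z = b/c, b, c ∈ R, c ∉ 𝔪}`),
with inverse sending a valuation subring `𝒪` to `𝔪_𝒪 ∩ R`
(note that `c ∈ 𝔪_𝒪 ↔ 𝒪.valuation c < 1`). -/
theorem stmt_5 {K L : Type*} [Field K] [Field L] [Algebra K L] [Algebra.IsAlgebraic K L]
    (v : ValuationSubring K) :
    ∃ e : {𝔪 : Ideal (integralClosure v L) // 𝔪.IsMaximal} ≃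
        {w : ValuationSubring L // w.comap (algebraMap K L) = v},
      ∀ 𝔪 : {𝔪 : Ideal (integralClosure v L) // 𝔪.IsMaximal},
        (((e 𝔪 : ValuationSubring L) : Set L) =
          {z : L | ∃ b c : integralClosure v L, c ∉ 𝔪.1 ∧ z * (c : L) = (b : L)}) ∧
        ∀ c : integralClosure v L,
          c ∈ 𝔪.1 ↔ (e 𝔪 : ValuationSubring L).valuation (c : L) < 1 := by
  classical
  have hRw : ∀ (w : ValuationSubring L), w.comap (algebraMap K L) = v →
      ∀ x : integralClosure v L, (x : L) ∈ w := fun w hw x =>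
    aux_int_mem v w (fun a ha => (aux_mem_iff v w hw a).mpr ha) x.2
  choose W hW1 hW2 using fun (m : {𝔪 : Ideal (integralClosure v L) // 𝔪.IsMaximal}) =>
    aux_main v m.1 m.2
  refine ⟨⟨fun m => ⟨W m, hW1 m⟩,
    fun w => ⟨extIdeal v w.1 (hRw w.1 w.2), extIdeal_isMaximal v w.1 w.2 (hRw w.1 w.2)⟩,
    ?_, ?_⟩, ?_⟩
  · intro m
    apply Subtype.ext
    ext x
    rw [mem_extIdeal]
    exact (hW2 m x).symm
  · intro w
    apply Subtype.ext
    apply SetLike.coe_injective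
    show ((W ⟨extIdeal v w.1 (hRw w.1 w.2), _⟩ : ValuationSubring L) : Set L) = _
    rw [aux_set v _ (hW1 ⟨extIdeal v w.1 (hRw w.1 w.2), _⟩)
      (extIdeal v w.1 (hRw w.1 w.2)) (hW2 ⟨extIdeal v w.1 (hRw w.1 w.2), _⟩)]
    exact (aux_set v w.1 w.2 (extIdeal v w.1 (hRw w.1 w.2))
      (fun x => mem_extIdeal v w.1 (hRw w.1 w.2) x)).symm
  · intro m
    exact ⟨aux_set v (W m) (hW1 m) m.1 (hW2 m), hW2 m⟩
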